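/- Let G = (V,E) be a finite simple graph, let A ⊊ V be a nonempty set with 4|A| ≤ |V∖A|, let α > 0, let σ be a real with 3|A|/|V∖A| ≤ σ ≤ 3/4, set ε_σ = σ/(3(1−σ)), and let c > 0 be a real. Suppose S' ⊆ V satisfies δ_G(S')/α + |A∖S'| + ε_σ·|S'∖A| = |A| − c. Then |S'| ≥ c and |V∖S'| ≥ c. -/
import Mathlib


/-- Edges of `G` with one endpoint in `S` and the other endpoint in `U \ S`:
the cut edges `∂(S)` of `S`, inside the subgraph of `G` induced by `U` (when `S ⊆ U`). -/
def cutEdgesIn {V : Type*} (G : SimpleGraph V) (U S : Set V) : Set (Sym2 V) :=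
  {e | e ∈ G.edgeSet ∧ ∃ u v, e = s(u, v) ∧ u ∈ S ∧ v ∈ U ∧ v ∉ S}

/-- `δ(S)`, the number of cut edges of `S` inside the subgraph induced by `U`. -/
noncomputable def deltaIn {V : Type*} (G : SimpleGraph V) (U S : Set V) : ℕ :=
  (cutEdgesIn G U S).ncard

/-- The expansion `φ(S)` of the cut `S` inside the subgraph of `G` induced by `U`. -/
noncomputable def phiIn {V : Type*} (G : SimpleGraph V) (U S : Set V) : ℝ :=
  (deltaIn G U S : ℝ) / min (S.ncard : ℝ) ((U \ S).ncard : ℝ)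

/-- With `∅ ≠ A ⊊ V`, `4|A| ≤ |V ∖ A|`, `α > 0`, `3|A|/|V∖A| ≤ σ ≤ 3/4`,
`ε_σ = σ/(3(1−σ))` and `c > 0`, if `S'` satisfies
`δ_G(S')/α + |A∖S'| + ε_σ·|S'∖A| = |A| − c` (a minimum cut of the augmented graph whose
capacity is the max-flow value `|A| − c`), then `|S'| ≥ c` and `|V ∖ S'| ≥ c`. -/
theorem stmt10 {V : Type*} [Fintype V] (G : SimpleGraph V) (A : Set V)
    (hAne : A.Nonempty) (hAproper : A ≠ Set.univ) (hA : 4 * A.ncard ≤ Aᶜ.ncard)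
    (α : ℝ) (hα : 0 < α) (σ : ℝ)
    (hσ1 : 3 * (A.ncard : ℝ) / (Aᶜ.ncard : ℝ) ≤ σ) (hσ2 : σ ≤ 3 / 4)
    (c : ℝ) (hc : 0 < c)
    (S' : Set V)
    (heq : (deltaIn G Set.univ S' : ℝ) / α + ((A \ S').ncard : ℝ) +
        (σ / (3 * (1 - σ))) * ((S' \ A).ncard : ℝ) = (A.ncard : ℝ) - c) :
    c ≤ (S'.ncard : ℝ) ∧ c ≤ (S'ᶜ.ncard : ℝ) := by
  set ε := σ / (3 * (1 - σ)) with hε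
  have hA0 : 0 < (A.ncard : ℝ) := by exact_mod_cast (Set.ncard_pos (Set.toFinite A)).2 hAne
  have hAc0 : 0 < (Aᶜ.ncard : ℝ) := by
    exact_mod_cast (Set.ncard_pos (Set.toFinite Aᶜ)).2 (Set.nonempty_compl.2 hAproper)
  have hσpos : 0 < σ := lt_of_lt_of_le (by positivity) hσ1
  have hden : 0 < 3 * (1 - σ) := by linarith
  have hεpos : 0 < ε := div_pos hσpos hden
  have hε1 : ε ≤ 1 := by rw [hε, div_le_one hden]; linarith
  have hσAc : 3 * (A.ncard : ℝ) ≤ σ * Aᶜ.ncard := by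
    rw [div_le_iff₀ hAc0] at hσ1; linarith
  have hεA : (A.ncard : ℝ) ≤ ε * Aᶜ.ncard := by
    rw [hε, div_mul_eq_mul_div, le_div_iff₀ hden]
    nlinarith
  have hδ : 0 ≤ (deltaIn G Set.univ S' : ℝ) / α := by positivity
  have hSA : (0:ℝ) ≤ ((S' \ A).ncard : ℝ) := Nat.cast_nonneg _
  have hAS : (0:ℝ) ≤ ((A \ S').ncard : ℝ) := Nat.cast_nonneg _
  have h1 : ((A \ S').ncard : ℝ) ≤ (A.ncard : ℝ) - c := by nlinarith
  have h2 : ε * ((S' \ A).ncard : ℝ) ≤ (A.ncard : ℝ) - c := by nlinarith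
  constructor
  · have hsplit : (A ∩ S').ncard + (A \ S').ncard = A.ncard :=
      Set.ncard_inter_add_ncard_diff_eq_ncard A S' (Set.toFinite A)
    have hsub : (A ∩ S').ncard ≤ S'.ncard :=
      Set.ncard_le_ncard Set.inter_subset_right (Set.toFinite S')
    have hsplit' : ((A ∩ S').ncard : ℝ) + ((A \ S').ncard : ℝ) = A.ncard := by
      exact_mod_cast hsplit
    have h3 : ((A ∩ S').ncard : ℝ) ≤ S'.ncard := by exact_mod_cast hsub
    linarith
  · have hsub : Aᶜ ⊆ S'ᶜ ∪ (S' \ A) := by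
      intro x hx
      by_cases hxS : x ∈ S'
      · exact Or.inr ⟨hxS, hx⟩
      · exact Or.inl hxS
    have hn : Aᶜ.ncard ≤ S'ᶜ.ncard + (S' \ A).ncard :=
      le_trans (Set.ncard_le_ncard hsub (Set.toFinite _)) (Set.ncard_union_le _ _)
    have h4 : (Aᶜ.ncard : ℝ) ≤ (S'ᶜ.ncard : ℝ) + ((S' \ A).ncard : ℝ) := by
      exact_mod_cast hn
    have h5 : ε * c ≤ ε * (S'ᶜ.ncard : ℝ) := by nlinarith
    exact le_of_mul_le_mul_left h5 hεpos
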